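/- Let L ≥ 3 be an integer, let ψ_ℓ : ℝ → ℝ for each ℓ ∈ [L], let d, n ∈ ℕ, set m_0 = d, and let m_1, …, m_L ∈ ℕ. For each ℓ ∈ [L−1] let u_ℓ ∈ ℝ^{m_ℓ} and define W_ℓ = e_1 u_ℓᵀ ∈ ℝ^{m_{ℓ-1} × m_ℓ} (the matrix whose first row is u_ℓᵀ and whose other rows are zero, so that W_ℓᵀ = u_ℓ e_1ᵀ). Let c_ℓ ∈ ℝ be the first entry of u_ℓ for each ℓ ∈ [L−2]. Let W_L ∈ ℝ^{m_{L-1} × m_L}, v ∈ ℝ^{m_L}, and X ∈ ℝ^{d×n}. Then vᵀ ψ_L(W_Lᵀ ψ_{L-1}(W_{L-1}ᵀ ⋯ ψ_1(W_1ᵀ X) ⋯)) = vᵀ ψ_L(W_Lᵀ ψ_{L-1}(u_{L-1} ψ_{L-2}(c_{L-2} ⋯ ψ_2(c_2 ψ_1(c_1 e_1ᵀ X)) ⋯))), where e_1 denotes the first standard coordinate vector of the appropriate dimension. In other words, with rank-one weight matrices of this form, the L-hidden-layer network coincides with a network whose first L−2 hidden layers each have width one, with scalar weights c_1, …, c_{L-2}.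 -/
import Mathlib


open scoped BigOperators

/-- The hidden layers of a feedforward neural network (without biases),
applied column-wise to the data matrix `X ∈ ℝ^{m 0 × n}`. -/
noncomputable def hiddenNB (m : ℕ → ℕ) (ψ : ℕ → ℝ → ℝ)
    (W : (ℓ : ℕ) → Matrix (Fin (m ℓ)) (Fin (m (ℓ + 1))) ℝ) (n : ℕ) :
    (L : ℕ) → (Fin (m 0) → Fin n → ℝ) → Fin (m L) → Fin n → ℝ
  | 0, X => X
  | L + 1, X => fun j i => ψ L (∑ s, W L s j * hiddenNB m ψ W n L X s i)

/-- The width-one stack `ψ_{k+1}(c_{k+1} ψ_k(c_k ⋯ ψ_1(c_1 t) ⋯))` (with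
`ψ`, `c` zero-indexed), applied entrywise to a row vector `t ∈ ℝ^{1×n}`. -/
noncomputable def sclStack (ψ : ℕ → ℝ → ℝ) (c : ℕ → ℝ) {n : ℕ}
    (t : Fin n → ℝ) : ℕ → Fin n → ℝ
  | 0 => fun i => ψ 0 (c 0 * t i)
  | k + 1 => fun i => ψ (k + 1) (c (k + 1) * sclStack ψ c t k i)

/-- Lemma 5.1.  Here `L = K + 3 ≥ 3`.  The activations are
`ψ 0, …, ψ (K+2)` (i.e. `ψ_1, …, ψ_L`), the rank-one weight matrices are
`W ℓ = e_1 (u ℓ)ᵀ ∈ ℝ^{m ℓ × m (ℓ+1)}` for the first `L−1` layers (i.e.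
paper `W_ℓ = e_1 u_ℓᵀ` for `ℓ ∈ [L−1]`), `c ℓ` is the first entry of `u ℓ`,
`WL` is the last weight matrix, and `v` the output weights.  Then the network
equals the network whose first `L−2` hidden layers have width one with scalar
weights `c 0, …, c K` (paper `c_1, …, c_{L−2}`). -/
theorem stmt11 (K : ℕ) (ψ : ℕ → ℝ → ℝ) (d n : ℕ)
    (m : ℕ → ℕ) (hm0 : m 0 = d) (hmpos : ∀ ℓ, ℓ ≤ K + 3 → 0 < m ℓ)
    (u : (ℓ : ℕ) → Fin (m (ℓ + 1)) → ℝ)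
    (W : (ℓ : ℕ) → Matrix (Fin (m ℓ)) (Fin (m (ℓ + 1))) ℝ)
    (hW : ∀ (ℓ : ℕ) (i : Fin (m ℓ)) (j : Fin (m (ℓ + 1))),
      W ℓ i j = if (i : ℕ) = 0 then u ℓ j else 0)
    (c : ℕ → ℝ)
    (hc : ∀ ℓ (h : ℓ ≤ K), c ℓ = u ℓ ⟨0, hmpos (ℓ + 1) (by omega)⟩)
    (WL : Matrix (Fin (m (K + 2))) (Fin (m (K + 3))) ℝ)
    (v : Fin (m (K + 3)) → ℝ) (X : Fin (m 0) → Fin n → ℝ) :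
    ∀ i : Fin n,
      (∑ j, v j * ψ (K + 2) (∑ s, WL s j * hiddenNB m ψ W n (K + 2) X s i)) =
      ∑ j, v j * ψ (K + 2) (∑ s, WL s j *
        ψ (K + 1) (u (K + 1) s *
          sclStack ψ c (fun i' => X ⟨0, hmpos 0 (by omega)⟩ i') K i)) := by
  intro i
  have hsum : ∀ (ℓ : ℕ) (hℓ : 0 < m ℓ) (f : Fin (m ℓ) → ℝ) (j : Fin (m (ℓ+1))),
      (∑ s, W ℓ s j * f s) = u ℓ j * f ⟨0, hℓ⟩ := by
    intro ℓ hℓ f j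
    rw [Finset.sum_eq_single (⟨0, hℓ⟩ : Fin (m ℓ))]
    · rw [hW]; simp
    · intro b _ hb
      rw [hW]
      have : (b : ℕ) ≠ 0 := fun h => hb (Fin.ext h)
      simp [this]
    · simp
  have hrec : ∀ k (hk : k ≤ K),
      hiddenNB m ψ W n (k+1) X ⟨0, hmpos (k+1) (by omega)⟩ i
        = sclStack ψ c (fun i' => X ⟨0, hmpos 0 (by omega)⟩ i') k i := by
    intro k
    induction k with
    | zero =>
      intro _
      show ψ 0 (∑ s, W 0 s _ * hiddenNB m ψ W n 0 X s i) = _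
      rw [hsum 0 (hmpos 0 (by omega))]
      simp only [sclStack]
      rw [hc 0 (by omega)]
      rfl
    | succ k ih =>
      intro hk
      show ψ (k+1) (∑ s, W (k+1) s _ * hiddenNB m ψ W n (k+1) X s i) = _
      rw [hsum (k+1) (hmpos (k+1) (by omega)), ih (by omega)]
      simp only [sclStack]
      rw [hc (k+1) (by omega)]
  refine Finset.sum_congr rfl fun j _ => ?_
  congr 1
  refine congrArg _ (Finset.sum_congr rfl fun s _ => ?_)
  congr 1
  show ψ (K+1) (∑ t, W (K+1) t s * hiddenNB m ψ W n (K+1) X t i) = _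
  rw [hsum (K+1) (hmpos (K+1) (by omega)), hrec K (le_refl K)]
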